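/- For any integer k ≥ 1, the game Σ_{i=1}^k ↑^i is incomparable with ∗, while Σ_{i=1}^k ↑^i + ↑^k is strictly greater than ∗. -/

import Mathlib

namespace SetTheory

universe u

/-- Pre-games, as in Mathlib before combinatorial game theory was removed from it. -/
inductive PGame : Type (u + 1)
  | mk : ∀ α β : Type u, (α → PGame) → (β → PGame) → PGame

namespace PGame

def LeftMoves : PGame.{u} → Type u
  | mk l _ _ _ => l

def RightMoves : PGame.{u} → Type u
  | mk _ r _ _ => r

def moveLeft : ∀ g : PGame.{u}, LeftMoves g → PGame.{u}
  | mk _ _ L _ => L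

def moveRight : ∀ g : PGame.{u}, RightMoves g → PGame.{u}
  | mk _ _ _ R => R

instance : Zero PGame.{u} :=
  ⟨⟨PEmpty, PEmpty, PEmpty.elim, PEmpty.elim⟩⟩

def star : PGame.{u} :=
  ⟨PUnit, PUnit, fun _ => 0, fun _ => 0⟩

def neg : PGame.{u} → PGame.{u}
  | mk l r L R => mk r l (fun i => neg (R i)) (fun i => neg (L i))

instance : Neg PGame.{u} :=
  ⟨neg⟩

def addAux (xl xr : Type u) (addL : xl → PGame.{u} → PGame.{u})
    (addR : xr → PGame.{u} → PGame.{u}) : PGame.{u} → PGame.{u}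
  | mk yl yr yL yR =>
    mk (xl ⊕ yl) (xr ⊕ yr)
      (Sum.elim (fun i => addL i (mk yl yr yL yR)) (fun i => addAux xl xr addL addR (yL i)))
      (Sum.elim (fun i => addR i (mk yl yr yL yR)) (fun i => addAux xl xr addL addR (yR i)))

def add : PGame.{u} → PGame.{u} → PGame.{u}
  | mk xl xr xL xR => addAux xl xr (fun i => add (xL i)) (fun i => add (xR i))

instance : Add PGame.{u} :=
  ⟨add⟩

instance : Sub PGame.{u} :=
  ⟨fun x y => x + -y⟩

/-- `(leLF x y).1` is `x ≤ y` and `(leLF x y).2` is `x ⧏ y`. -/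
def leLFAux (xl xr : Type u) (lfL : xl → PGame.{u} → Prop × Prop)
    (lfR : xr → PGame.{u} → Prop × Prop) : PGame.{u} → Prop × Prop
  | mk yl yr yL yR =>
    ((∀ i, (lfL i (mk yl yr yL yR)).2) ∧ ∀ j, (leLFAux xl xr lfL lfR (yR j)).2,
      (∃ i, (leLFAux xl xr lfL lfR (yL i)).1) ∨ ∃ j, (lfR j (mk yl yr yL yR)).1)

def leLF : PGame.{u} → PGame.{u} → Prop × Prop
  | mk xl xr xL xR => leLFAux xl xr (fun i => leLF (xL i)) (fun j => leLF (xR j))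

instance : LE PGame.{u} :=
  ⟨fun x y => (leLF x y).1⟩

def LF (x y : PGame.{u}) : Prop :=
  ¬y ≤ x

instance : LT PGame.{u} :=
  ⟨fun x y => x ≤ y ∧ LF x y⟩

def Fuzzy (x y : PGame.{u}) : Prop :=
  LF x y ∧ LF y x

end PGame

end SetTheory

open SetTheory

open scoped PGame

namespace SeqCompound

open Classical in
/-- The sequential compound `G → H` of two pregames. -/
noncomputable def seqc : PGame → PGame → PGame
  | PGame.mk α β L R, H =>
    if Nonempty α then
      if Nonempty β then
        PGame.mk α β (fun a => seqc (L a) H) (fun b => seqc (R b) H)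
      else
        PGame.mk α H.RightMoves (fun a => seqc (L a) H) H.moveRight
    else
      if Nonempty β then
        PGame.mk H.LeftMoves β H.moveLeft (fun b => seqc (R b) H)
      else H

/-- A pregame is dicotic (all-small) if in every subposition,
Left has an option iff Right has an option. -/
def Dicotic : PGame → Prop
  | PGame.mk α β L R =>
    (Nonempty α ↔ Nonempty β) ∧ (∀ a, Dicotic (L a)) ∧ (∀ b, Dicotic (R b))

/-- The canonical nonnegative integer game `{n-1 | }`. -/
def intGame : ℕ → PGame
  | 0 => 0
  | n + 1 => PGame.mk PUnit PEmpty (fun _ => intGame n) PEmpty.elim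

/-- `upSum k` is the disjunctive sum `↑¹ + ↑² + ⋯ + ↑ᵏ`. -/
def upSum : ℕ → PGame
  | 0 => 0
  | k + 1 => upSum k +
      PGame.mk PUnit PUnit (fun _ => 0) (fun _ => PGame.star - upSum k)

/-- `upPow k` is the game `↑^(k+1) = {0 | ∗ - (↑¹ + ⋯ + ↑ᵏ)}`. -/
def upPow (k : ℕ) : PGame :=
  PGame.mk PUnit PUnit (fun _ => 0) (fun _ => PGame.star - upSum k)

/-- Sequential compound of a list of games. -/
noncomputable def seqList : List PGame → PGame
  | [] => 0
  | G :: l => seqc G (seqList l)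

end SeqCompound


namespace SetTheory

namespace PGame

infixl:50 " ⧏ " => LF

theorem leLF_fst_mk {xl xr : Type u} {xL : xl → PGame.{u}} {xR : xr → PGame.{u}}
    {yl yr : Type u} {yL : yl → PGame.{u}} {yR : yr → PGame.{u}} :
    (leLF (mk xl xr xL xR) (mk yl yr yL yR)).1 ↔
      (∀ i, (leLF (xL i) (mk yl yr yL yR)).2) ∧ ∀ j, (leLF (mk xl xr xL xR) (yR j)).2 :=
  Iff.rfl

theorem leLF_snd_mk {xl xr : Type u} {xL : xl → PGame.{u}} {xR : xr → PGame.{u}}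
    {yl yr : Type u} {yL : yl → PGame.{u}} {yR : yr → PGame.{u}} :
    (leLF (mk xl xr xL xR) (mk yl yr yL yR)).2 ↔
      (∃ i, (leLF (mk xl xr xL xR) (yL i)).1) ∨ ∃ j, (leLF (xR j) (mk yl yr yL yR)).1 :=
  Iff.rfl

theorem leLF_snd_iff (x y : PGame.{u}) :
    ((leLF x y).2 ↔ ¬ (leLF y x).1) ∧ ((leLF y x).2 ↔ ¬ (leLF x y).1) := by
  induction x generalizing y with
  | mk xl xr xL xR ihxl ihxr =>
    induction y with
    | mk yl yr yL yR ihyl ihyr =>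
      have h1 : ∀ i, (leLF (yL i) (mk xl xr xL xR)).2 ↔ ¬ (leLF (mk xl xr xL xR) (yL i)).1 :=
        fun i => (ihyl i).2
      have h2 : ∀ j, (leLF (mk yl yr yL yR) (xR j)).2 ↔ ¬ (leLF (xR j) (mk yl yr yL yR)).1 :=
        fun j => (ihxr j _).2
      have h3 : ∀ i, (leLF (xL i) (mk yl yr yL yR)).2 ↔ ¬ (leLF (mk yl yr yL yR) (xL i)).1 :=
        fun i => (ihxl i _).1
      have h4 : ∀ j, (leLF (mk xl xr xL xR) (yR j)).2 ↔ ¬ (leLF (yR j) (mk xl xr xL xR)).1 :=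
        fun j => (ihyr j).1
      rw [leLF_snd_mk, leLF_fst_mk, leLF_snd_mk, leLF_fst_mk]
      constructor
      · simp only [h1, h2, not_and_or, not_forall, not_not]
      · simp only [h3, h4, not_and_or, not_forall, not_not]

theorem lf_iff_snd {x y : PGame} : x ⧏ y ↔ (leLF x y).2 := ((leLF_snd_iff x y).1).symm

theorem le_iff_forall_lf {x y : PGame} :
    x ≤ y ↔ (∀ i, x.moveLeft i ⧏ y) ∧ ∀ j, x ⧏ y.moveRight j := by
  cases x; cases y; simp only [lf_iff_snd]; exact leLF_fst_mk

theorem lf_iff_exists_le {x y : PGame} :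
    x ⧏ y ↔ (∃ i, x ≤ y.moveLeft i) ∨ ∃ j, x.moveRight j ≤ y := by
  cases x; cases y; rw [lf_iff_snd]; exact leLF_snd_mk

theorem not_le {x y : PGame} : ¬ x ≤ y ↔ y ⧏ x := Iff.rfl

theorem lf_of_le_moveLeft {x y : PGame} {i : y.LeftMoves} (h : x ≤ y.moveLeft i) : x ⧏ y :=
  lf_iff_exists_le.2 (Or.inl ⟨i, h⟩)

theorem lf_of_moveRight_le {x y : PGame} {j : x.RightMoves} (h : x.moveRight j ≤ y) : x ⧏ y :=
  lf_iff_exists_le.2 (Or.inr ⟨j, h⟩)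

theorem moveLeft_lf_of_le {x y : PGame} (h : x ≤ y) (i : x.LeftMoves) : x.moveLeft i ⧏ y :=
  (le_iff_forall_lf.1 h).1 i

theorem lf_moveRight_of_le {x y : PGame} (h : x ≤ y) (j : y.RightMoves) : x ⧏ y.moveRight j :=
  (le_iff_forall_lf.1 h).2 j

theorem le_of_forall_lf {x y : PGame} (h1 : ∀ i, x.moveLeft i ⧏ y) (h2 : ∀ j, x ⧏ y.moveRight j) :
    x ≤ y :=
  le_iff_forall_lf.2 ⟨h1, h2⟩

theorem le_refl' (x : PGame) : x ≤ x := by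
  induction x with
  | mk xl xr xL xR ihl ihr =>
    exact le_of_forall_lf (fun i => lf_of_le_moveLeft (i := i) (ihl i))
      (fun j => lf_of_moveRight_le (j := j) (ihr j))

theorem le_trans_aux {x y z : PGame}
    (h₁ : ∀ {i}, y ≤ z → z ≤ x.moveLeft i → y ≤ x.moveLeft i)
    (h₂ : ∀ {j}, z.moveRight j ≤ x → x ≤ y → z.moveRight j ≤ y) (hxy : x ≤ y) (hyz : y ≤ z) :
    x ≤ z :=
  le_of_forall_lf (fun i => not_le.1 fun h => (moveLeft_lf_of_le hxy i) (h₁ hyz h))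
    fun j => not_le.1 fun h => (lf_moveRight_of_le hyz j) (h₂ h hxy)

theorem le_trans_all (x y z : PGame) :
    (x ≤ y → y ≤ z → x ≤ z) ∧ (y ≤ z → z ≤ x → y ≤ x) ∧ (z ≤ x → x ≤ y → z ≤ y) := by
  induction x generalizing y z with
  | mk xl xr xL xR IHxl IHxr =>
    induction y generalizing z with
    | mk yl yr yL yR IHyl IHyr =>
      induction z with
      | mk zl zr zL zR IHzl IHzr =>
        exact ⟨le_trans_aux (fun {i} => (IHxl i _ _).2.1) fun {j} => (IHzr j).2.2,
          le_trans_aux (fun {i} => (IHyl i _).2.2) fun {j} => (IHxr j _ _).1,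
          le_trans_aux (fun {i} => (IHzl i).1) fun {j} => (IHyr j _).2.1⟩

instance : Preorder PGame where
  le x y := x ≤ y
  lt x y := x < y
  le_refl := le_refl'
  le_trans x y z := (le_trans_all x y z).1
  lt_iff_le_not_ge _ _ := Iff.rfl

theorem lf_of_lt {x y : PGame} (h : x < y) : x ⧏ y := h.2

theorem lt_iff_le_and_lf {x y : PGame} : x < y ↔ x ≤ y ∧ x ⧏ y := Iff.rfl

theorem zero_le_lf {x : PGame} : 0 ≤ x ↔ ∀ j, 0 ⧏ x.moveRight j := by
  rw [le_iff_forall_lf]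
  exact ⟨fun h => h.2, fun h => ⟨fun i => PEmpty.elim i, h⟩⟩

theorem zero_lf_star : (0 : PGame.{u}) ⧏ star :=
  @lf_of_le_moveLeft 0 star PUnit.unit (le_refl' 0)

theorem neg_zero_eq : -(0 : PGame.{u}) = 0 :=
  congrArg₂ (mk PEmpty PEmpty) (funext fun i => i.elim) (funext fun i => i.elim)

theorem neg_star : -star.{u} = star := by
  show mk PUnit PUnit (fun _ => -(0 : PGame)) (fun _ => -(0 : PGame)) =
    mk PUnit PUnit (fun _ => 0) (fun _ => 0)
  rw [neg_zero_eq]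

instance setoid : Setoid PGame :=
  ⟨fun x y => x ≤ y ∧ y ≤ x, ⟨fun x => ⟨le_rfl, le_rfl⟩, fun h => ⟨h.2, h.1⟩,
    fun h1 h2 => ⟨h1.1.trans h2.1, h2.2.trans h1.2⟩⟩⟩

theorem equiv_iff {x y : PGame} : x ≈ y ↔ x ≤ y ∧ y ≤ x := Iff.rfl

theorem equiv_of_exists {x y : PGame}
    (hl₁ : ∀ i, ∃ j, x.moveLeft i ≈ y.moveLeft j) (hr₁ : ∀ i, ∃ j, x.moveRight i ≈ y.moveRight j)
    (hl₂ : ∀ j, ∃ i, x.moveLeft i ≈ y.moveLeft j) (hr₂ : ∀ j, ∃ i, x.moveRight i ≈ y.moveRight j) :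
    x ≈ y := by
  refine equiv_iff.2 ⟨le_of_forall_lf (fun i => ?_) (fun j => ?_),
    le_of_forall_lf (fun j => ?_) (fun i => ?_)⟩
  · obtain ⟨j, hj⟩ := hl₁ i
    exact lf_of_le_moveLeft (equiv_iff.1 hj).1
  · obtain ⟨i, hi⟩ := hr₂ j
    exact lf_of_moveRight_le (equiv_iff.1 hi).1
  · obtain ⟨i, hi⟩ := hl₂ j
    exact lf_of_le_moveLeft (equiv_iff.1 hi).2
  · obtain ⟨j, hj⟩ := hr₁ i
    exact lf_of_moveRight_le (equiv_iff.1 hj).2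

def toLeftMovesAdd : ∀ {x y : PGame.{u}}, x.LeftMoves ⊕ y.LeftMoves → (x + y).LeftMoves
  | mk _ _ _ _, mk _ _ _ _, i => i

def toRightMovesAdd : ∀ {x y : PGame.{u}}, x.RightMoves ⊕ y.RightMoves → (x + y).RightMoves
  | mk _ _ _ _, mk _ _ _ _, i => i

theorem add_moveLeft_inl {x y : PGame} (i : x.LeftMoves) :
    (x + y).moveLeft (toLeftMovesAdd (Sum.inl i)) = x.moveLeft i + y := by
  cases x; cases y; rfl

theorem add_moveLeft_inr {x y : PGame} (i : y.LeftMoves) :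
    (x + y).moveLeft (toLeftMovesAdd (Sum.inr i)) = x + y.moveLeft i := by
  cases x; cases y; rfl

theorem add_moveRight_inl {x y : PGame} (i : x.RightMoves) :
    (x + y).moveRight (toRightMovesAdd (Sum.inl i)) = x.moveRight i + y := by
  cases x; cases y; rfl

theorem add_moveRight_inr {x y : PGame} (i : y.RightMoves) :
    (x + y).moveRight (toRightMovesAdd (Sum.inr i)) = x + y.moveRight i := by
  cases x; cases y; rfl

theorem rightMoves_add_cases {x y : PGame} (k : (x + y).RightMoves)
    {P : (x + y).RightMoves → Prop}
    (hl : ∀ j, P (toRightMovesAdd (Sum.inl j))) (hr : ∀ j, P (toRightMovesAdd (Sum.inr j))) :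
    P k := by
  cases x; cases y
  rcases k with i | i
  · exact hl i
  · exact hr i

theorem add_comm_equiv (x y : PGame.{u}) : x + y ≈ y + x := by
  induction x generalizing y with
  | mk xl xr xL xR ihxl ihxr =>
    induction y with
    | mk yl yr yL yR ihyl ihyr =>
      refine equiv_of_exists ?_ ?_ ?_ ?_
      · rintro (i | i)
        · exact ⟨Sum.inr i, ihxl i _⟩
        · exact ⟨Sum.inl i, ihyl i⟩
      · rintro (i | i)
        · exact ⟨Sum.inr i, ihxr i _⟩
        · exact ⟨Sum.inl i, ihyr i⟩
      · rintro (i | i)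
        · exact ⟨Sum.inr i, ihyl i⟩
        · exact ⟨Sum.inl i, ihxl i _⟩
      · rintro (i | i)
        · exact ⟨Sum.inr i, ihyr i⟩
        · exact ⟨Sum.inl i, ihxr i _⟩

theorem add_assoc_equiv (x y z : PGame.{u}) : x + y + z ≈ x + (y + z) := by
  induction x generalizing y z with
  | mk xl xr xL xR ihxl ihxr =>
    induction y generalizing z with
    | mk yl yr yL yR ihyl ihyr =>
      induction z with
      | mk zl zr zL zR ihzl ihzr =>
        refine equiv_of_exists ?_ ?_ ?_ ?_
        · rintro ((i | i) | i)
          · exact ⟨Sum.inl i, ihxl i _ _⟩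
          · exact ⟨Sum.inr (Sum.inl i), ihyl i _⟩
          · exact ⟨Sum.inr (Sum.inr i), ihzl i⟩
        · rintro ((i | i) | i)
          · exact ⟨Sum.inl i, ihxr i _ _⟩
          · exact ⟨Sum.inr (Sum.inl i), ihyr i _⟩
          · exact ⟨Sum.inr (Sum.inr i), ihzr i⟩
        · rintro (i | (i | i))
          · exact ⟨Sum.inl (Sum.inl i), ihxl i _ _⟩
          · exact ⟨Sum.inl (Sum.inr i), ihyl i _⟩
          · exact ⟨Sum.inr i, ihzl i⟩
        · rintro (i | (i | i))
          · exact ⟨Sum.inl (Sum.inl i), ihxr i _ _⟩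
          · exact ⟨Sum.inl (Sum.inr i), ihyr i _⟩
          · exact ⟨Sum.inr i, ihzr i⟩

theorem zero_add_equiv (x : PGame.{u}) : 0 + x ≈ x := by
  induction x with
  | mk xl xr xL xR ihl ihr =>
    refine equiv_of_exists ?_ ?_ ?_ ?_
    · rintro (i | i)
      · exact PEmpty.elim i
      · exact ⟨i, ihl i⟩
    · rintro (i | i)
      · exact PEmpty.elim i
      · exact ⟨i, ihr i⟩
    · intro i
      exact ⟨Sum.inr i, ihl i⟩
    · intro i
      exact ⟨Sum.inr i, ihr i⟩

theorem neg_add_le_zero (x : PGame.{u}) : -x + x ≤ 0 ∧ 0 ≤ -x + x := by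
  induction x with
  | mk xl xr xL xR ihl ihr =>
    constructor
    · refine le_of_forall_lf ?_ (fun j => PEmpty.elim j)
      rintro (i | i)
      · show -(xR i) + mk xl xr xL xR ⧏ 0
        exact lf_of_moveRight_le (j := toRightMovesAdd (Sum.inr i))
          (by erw [add_moveRight_inr]; exact (ihr i).1)
      · show -(mk xl xr xL xR) + xL i ⧏ 0
        exact lf_of_moveRight_le (j := toRightMovesAdd (Sum.inl i))
          (by erw [add_moveRight_inl]; exact (ihl i).1)
    · refine le_of_forall_lf (fun i => PEmpty.elim i) ?_
      rintro (i | i)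
      · show 0 ⧏ -(xL i) + mk xl xr xL xR
        exact lf_of_le_moveLeft (i := toLeftMovesAdd (Sum.inr i))
          (by erw [add_moveLeft_inr]; exact (ihl i).2)
      · show 0 ⧏ -(mk xl xr xL xR) + xR i
        exact lf_of_le_moveLeft (i := toLeftMovesAdd (Sum.inl i))
          (by erw [add_moveLeft_inl]; exact (ihr i).2)

theorem neg_le_lf (x y : PGame.{u}) : (x ≤ y → -y ≤ -x) ∧ (x ⧏ y → -y ⧏ -x) := by
  induction x generalizing y with
  | mk xl xr xL xR ihxl ihxr =>
    induction y with
    | mk yl yr yL yR ihyl ihyr =>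
      constructor
      · intro h
        refine le_of_forall_lf (fun i => ?_) (fun j => ?_)
        · exact (ihyr i).2 (lf_moveRight_of_le h i)
        · exact (ihxl j _).2 (moveLeft_lf_of_le h j)
      · intro h
        rcases lf_iff_exists_le.1 h with ⟨i, hi⟩ | ⟨j, hj⟩
        · exact lf_of_moveRight_le (j := i) ((ihyl i).1 hi)
        · exact lf_of_le_moveLeft (i := j) ((ihxr j _).1 hj)

theorem add_le_lf_right (x y z : PGame.{u}) :
    (x ≤ y → x + z ≤ y + z) ∧ (x ⧏ y → x + z ⧏ y + z) := by
  induction x generalizing y z with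
  | mk xl xr xL xR ihxl ihxr =>
    induction y generalizing z with
    | mk yl yr yL yR ihyl ihyr =>
      induction z with
      | mk zl zr zL zR ihzl ihzr =>
        constructor
        · intro h
          refine le_of_forall_lf ?_ ?_
          · rintro (i | k)
            · exact (ihxl i _ _).2 (moveLeft_lf_of_le h i)
            · exact lf_of_le_moveLeft (i := Sum.inr k) ((ihzl k).1 h)
          · rintro (j | k)
            · exact (ihyr j _).2 (lf_moveRight_of_le h j)
            · exact lf_of_moveRight_le (j := Sum.inr k) ((ihzr k).1 h)
        · intro h
          rcases lf_iff_exists_le.1 h with ⟨i, hi⟩ | ⟨j, hj⟩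
          · exact lf_of_le_moveLeft (i := Sum.inl i) ((ihyl i _).1 hi)
          · exact lf_of_moveRight_le (j := Sum.inl j) ((ihxr j _ _).1 hj)

theorem add_le_add_left' {x y : PGame} (z : PGame) (h : x ≤ y) : z + x ≤ z + y :=
  le_trans (equiv_iff.1 (add_comm_equiv z x)).1
    (le_trans ((add_le_lf_right x y z).1 h) (equiv_iff.1 (add_comm_equiv y z)).1)

theorem add_congr {a b c d : PGame} (h1 : a ≈ b) (h2 : c ≈ d) : a + c ≈ b + d :=
  equiv_iff.2 ⟨le_trans ((add_le_lf_right a b c).1 (equiv_iff.1 h1).1)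
      (add_le_add_left' b (equiv_iff.1 h2).1),
    le_trans ((add_le_lf_right b a d).1 (equiv_iff.1 h1).2)
      (add_le_add_left' a (equiv_iff.1 h2).2)⟩

theorem neg_congr {a b : PGame} (h : a ≈ b) : -a ≈ -b :=
  equiv_iff.2 ⟨(neg_le_lf b a).1 (equiv_iff.1 h).2, (neg_le_lf a b).1 (equiv_iff.1 h).1⟩

end PGame

abbrev Game : Type (u + 1) := Quotient PGame.setoid.{u}

namespace Game

open PGame

instance : Add Game :=
  ⟨Quotient.lift₂ (fun a b => (⟦a + b⟧ : Game)) fun _ _ _ _ ha hb => Quotient.sound (add_congr ha hb)⟩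

instance : Neg Game :=
  ⟨Quotient.lift (fun a => (⟦-a⟧ : Game)) fun _ _ h => Quotient.sound (neg_congr h)⟩

instance : Zero Game :=
  ⟨⟦0⟧⟩

instance : AddCommGroup Game where
  add := (· + ·)
  zero := 0
  neg := Neg.neg
  add_assoc := by
    rintro ⟨a⟩ ⟨b⟩ ⟨c⟩
    exact Quotient.sound (add_assoc_equiv a b c)
  zero_add := by
    rintro ⟨a⟩
    exact Quotient.sound (zero_add_equiv a)
  add_zero := by
    rintro ⟨a⟩
    exact Quotient.sound (Setoid.trans (add_comm_equiv a 0) (zero_add_equiv a))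
  neg_add_cancel := by
    rintro ⟨a⟩
    exact Quotient.sound (equiv_iff.2 (neg_add_le_zero a))
  add_comm := by
    rintro ⟨a⟩ ⟨b⟩
    exact Quotient.sound (add_comm_equiv a b)
  nsmul := nsmulRec
  zsmul := zsmulRec

instance : LE Game :=
  ⟨Quotient.lift₂ (fun a b => a ≤ b) fun _ _ _ _ ha hb =>
    propext ⟨fun h => le_trans (le_trans (equiv_iff.1 ha).2 h) (equiv_iff.1 hb).1,
      fun h => le_trans (le_trans (equiv_iff.1 ha).1 h) (equiv_iff.1 hb).2⟩⟩

instance : LT Game :=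
  ⟨fun a b => a ≤ b ∧ ¬ b ≤ a⟩

instance instPreorderGame : Preorder Game where
  le a b := a ≤ b
  lt a b := a < b
  lt_iff_le_not_ge _ _ := Iff.rfl
  le_refl := by
    rintro ⟨a⟩
    exact le_refl' a
  le_trans := by
    rintro ⟨a⟩ ⟨b⟩ ⟨c⟩ h1 h2
    exact le_trans (α := PGame) h1 h2

instance : PartialOrder Game :=
  { instPreorderGame with
  le_antisymm := by
    rintro ⟨a⟩ ⟨b⟩ h1 h2
    exact Quotient.sound (equiv_iff.2 ⟨h1, h2⟩) }

instance : IsOrderedAddMonoid Game where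
  add_le_add_left := by
    rintro ⟨a⟩ ⟨b⟩ h ⟨c⟩
    exact (add_le_lf_right a b c).1 h

end Game

namespace PGame

theorem quot_add (a b : PGame) : (⟦a + b⟧ : Game) = ⟦a⟧ + ⟦b⟧ := rfl

theorem quot_neg (a : PGame) : (⟦-a⟧ : Game) = -⟦a⟧ := rfl

theorem quot_sub (a b : PGame) : (⟦a - b⟧ : Game) = ⟦a⟧ - ⟦b⟧ := rfl

theorem quot_zero : (⟦0⟧ : Game) = 0 := rfl

theorem le_iff_game_le {x y : PGame} : x ≤ y ↔ (⟦x⟧ : Game) ≤ ⟦y⟧ := Iff.rfl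

theorem lt_iff_game_lt {x y : PGame} : x < y ↔ (⟦x⟧ : Game) < ⟦y⟧ := Iff.rfl

end PGame

end SetTheory

namespace SeqCompound

open PGame

theorem upSum_succ (k : ℕ) : upSum (k + 1) = upSum k + upPow k := rfl

theorem game_star_add_star : (⟦PGame.star⟧ : Game) + ⟦PGame.star⟧ = 0 := by
  have h : (⟦-PGame.star⟧ : Game) = ⟦PGame.star⟧ := by rw [PGame.neg_star]
  calc (⟦PGame.star⟧ : Game) + ⟦PGame.star⟧
      = ⟦PGame.star⟧ + ⟦-PGame.star⟧ := by rw [h]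
    _ = 0 := by rw [quot_neg, add_neg_cancel]

theorem game_star_le_of_nonneg_add_star {r : Game}
    (h : 0 ≤ r + ⟦PGame.star⟧) : (⟦PGame.star⟧ : Game) ≤ r := by
  have h2 := add_le_add_left h (⟦PGame.star⟧ : Game)
  simpa [add_assoc, game_star_add_star] using h2

theorem upPow_moveRight (k : ℕ) (j : (upPow k).RightMoves) :
    (upPow k).moveRight j = PGame.star - upSum k := rfl

theorem upPow_moveLeft (k : ℕ) (j : (upPow k).LeftMoves) :
    (upPow k).moveLeft j = 0 := rfl

/-- `↑¹ + ⋯ + ↑ᵏ ⧏ ∗`. -/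
theorem upSum_lf_star : ∀ k, upSum k ⧏ PGame.star
  | 0 => zero_lf_star
  | (k + 1) => by
    rw [upSum_succ]
    apply PGame.lf_of_moveRight_le
      (j := toRightMovesAdd (y := upPow k) (Sum.inr PUnit.unit))
    erw [add_moveRight_inr, upPow_moveRight, le_iff_game_le]
    simp only [quot_add, quot_sub]
    have e : (⟦upSum k⟧ : Game) + (⟦PGame.star⟧ - ⟦upSum k⟧) = ⟦PGame.star⟧ := by
      abel
    rw [e]

/-- `0 < ↑^(k+1)`. -/
theorem zero_lt_upPow (k : ℕ) : 0 < upPow k := by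
  rw [lt_iff_le_and_lf]
  constructor
  · rw [zero_le_lf]
    intro j
    rw [upPow_moveRight, ← PGame.not_le]
    intro h
    have h2 : PGame.star ≤ upSum k := by
      rw [le_iff_game_le] at h ⊢
      simp only [quot_sub, quot_zero] at h
      exact sub_nonpos.mp h
    exact (upSum_lf_star k) h2
  · exact PGame.lf_of_le_moveLeft (i := PUnit.unit) le_rfl

theorem zero_le_upSum (k : ℕ) : 0 ≤ upSum k := by
  induction k with
  | zero => exact le_rfl
  | succ k ih =>
    rw [upSum_succ, le_iff_game_le]
    have h1 := le_iff_game_le.1 ih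
    have h2 := (lt_iff_game_lt.1 (zero_lt_upPow k)).le
    simp only [quot_add, quot_zero] at *
    exact add_nonneg h1 h2

theorem zero_lt_upSum (k : ℕ) : 0 < upSum (k + 1) := by
  rw [upSum_succ, lt_iff_game_lt]
  have h1 := le_iff_game_le.1 (zero_le_upSum k)
  have h2 := lt_iff_game_lt.1 (zero_lt_upPow k)
  simp only [quot_add, quot_zero] at *
  exact add_pos_of_nonneg_of_pos h1 h2

/-- Every Right option of `upSum k`, plus `∗`, is nonnegative. -/
theorem zero_le_upSum_moveRight_add_star :
    ∀ k (j : (upSum k).RightMoves), 0 ≤ (upSum k).moveRight j + PGame.star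
  | 0, j => by exact PEmpty.elim j
  | (k + 1), j => by
    show 0 ≤ (upSum k + upPow k).moveRight j + PGame.star
    refine PGame.rightMoves_add_cases (x := upSum k) (y := upPow k)
      (P := fun j => 0 ≤ (upSum k + upPow k).moveRight j + PGame.star) j ?_ ?_
    · intro i
      rw [add_moveRight_inl, le_iff_game_le]
      have ih := le_iff_game_le.1 (zero_le_upSum_moveRight_add_star k i)
      have hu := (lt_iff_game_lt.1 (zero_lt_upPow k)).le
      simp only [quot_add, quot_zero] at *
      calc (0 : Game) ≤ (⟦(upSum k).moveRight i⟧ + ⟦PGame.star⟧) + ⟦upPow k⟧ :=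
            add_nonneg ih hu
        _ = ⟦(upSum k).moveRight i⟧ + ⟦upPow k⟧ + ⟦PGame.star⟧ := by abel
    · intro i
      rw [add_moveRight_inr, upPow_moveRight, le_iff_game_le]
      simp only [quot_add, quot_sub, quot_zero]
      have e : (⟦upSum k⟧ : Game) + (⟦PGame.star⟧ - ⟦upSum k⟧) + ⟦PGame.star⟧
          = ⟦PGame.star⟧ + ⟦PGame.star⟧ := by abel
      rw [e, game_star_add_star]

end SeqCompound

open SeqCompound in
/-- for `k ≥ 1`, `↑¹ + ⋯ + ↑ᵏ` is incomparable with `∗`, while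
`↑¹ + ⋯ + ↑ᵏ + ↑ᵏ > ∗` (here `upSum (k+1) = ↑¹ + ⋯ + ↑^(k+1)` and `upPow k = ↑^(k+1)`). -/
theorem upSum_fuzzy_star_lt (k : ℕ) :
    PGame.Fuzzy (upSum (k + 1)) PGame.star ∧
      PGame.star < upSum (k + 1) + upPow k := by
  have hSum := PGame.le_iff_game_le.1 (zero_le_upSum (k + 1))
  have hPow := (PGame.lt_iff_game_lt.1 (zero_lt_upPow k)).le
  simp only [PGame.quot_zero] at hSum hPow
  constructor
  · constructor
    · exact upSum_lf_star (k + 1)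
    · exact PGame.lf_of_moveRight_le (j := PUnit.unit) (zero_le_upSum (k + 1))
  · rw [PGame.lt_iff_le_and_lf]
    constructor
    · rw [PGame.le_iff_forall_lf]
      constructor
      · intro i
        show (0 : PGame) ⧏ _
        apply PGame.lf_of_lt
        rw [PGame.lt_iff_game_lt]
        have h1 := PGame.lt_iff_game_lt.1 (zero_lt_upSum k)
        simp only [PGame.quot_add, PGame.quot_zero] at *
        exact add_pos_of_pos_of_nonneg h1 hPow
      · intro j
        refine PGame.rightMoves_add_cases (x := upSum (k + 1)) (y := upPow k)
          (P := fun j => PGame.star ⧏ (upSum (k + 1) + upPow k).moveRight j)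
          j ?_ ?_
        · intro i
          rw [PGame.add_moveRight_inl]
          apply PGame.lf_of_le_moveLeft
            (i := PGame.toLeftMovesAdd (y := upPow k) (Sum.inr PUnit.unit))
          erw [PGame.add_moveLeft_inr, upPow_moveLeft]
          have hC := PGame.le_iff_game_le.1
            (zero_le_upSum_moveRight_add_star (k + 1) i)
          simp only [PGame.quot_add, PGame.quot_zero] at hC
          rw [PGame.le_iff_game_le]
          simp only [PGame.quot_add, PGame.quot_zero, add_zero]
          exact game_star_le_of_nonneg_add_star hC
        · intro i
          rw [PGame.add_moveRight_inr, upPow_moveRight, upSum_succ]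
          apply PGame.lf_of_le_moveLeft
            (i := PGame.toLeftMovesAdd
              (Sum.inl (PGame.toLeftMovesAdd (y := upPow k) (Sum.inr PUnit.unit))))
          erw [PGame.add_moveLeft_inl, PGame.add_moveLeft_inr, upPow_moveLeft]
          rw [PGame.le_iff_game_le]
          simp only [PGame.quot_add, PGame.quot_sub, PGame.quot_zero]
          have e : ((⟦upSum k⟧ : Game) + 0) + (⟦PGame.star⟧ - ⟦upSum k⟧)
              = ⟦PGame.star⟧ := by abel
          rw [e]
    · apply PGame.lf_of_moveRight_le (x := PGame.star) (j := PUnit.unit)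
      show (0 : PGame) ≤ _
      rw [PGame.le_iff_game_le]
      simp only [PGame.quot_add, PGame.quot_zero]
      exact add_nonneg hSum hPow
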